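/- Suppose k ≥ 3, s_m = w_n with m > n ≥ 2, and set P = (2k+1+2·sqrt(k^2+k))^m / sqrt(k+1) and Q = sqrt((c−k)/c)·(2c−1+2·sqrt(c^2−c))^n. Then Q > P and 0 < log(Q/P) < 1.00001·(2c−1+2·sqrt(c^2−c))^{−2n}; equivalently, with α1 = 2c−1+2·sqrt(c^2−c), α2 = 2k+1+2·sqrt(k^2+k), α3 = sqrt((c−k)(k+1)/c), the linear form Λ = n·log α1 − m·log α2 + log α3 satisfies 0 < Λ < 1.00001·α1^{−2n}. -/

import Mathlib

lemma closed_form (u : ℕ → ℤ) (t : ℤ)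
    (hrec : ∀ j, u (j + 2) = t * u (j + 1) - u j)
    (a b A : ℝ) (hab : a * b = 1) (hsum : a + b = (t : ℝ))
    (h0 : (u 0 : ℝ) = A * (a ^ 0 - b ^ 0))
    (h1 : (u 1 : ℝ) = A * (a ^ 1 - b ^ 1)) :
    ∀ j, (u j : ℝ) = A * (a ^ j - b ^ j) := by
  intro j
  induction j using Nat.twoStepInduction with
  | zero => exact h0
  | one => exact h1
  | more j ih1 ih2 =>
    have h : ((u (j + 2) : ℤ) : ℝ) = (t : ℝ) * (u (j+1) : ℝ) - (u j : ℝ) := by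
      rw [hrec j]; push_cast; ring
    rw [h, ih1, ih2]
    linear_combination (-(A * (a ^ (j + 1) - b ^ (j + 1)))) * hsum + (A * (a ^ j - b ^ j)) * hab


lemma aux_gt1 (a C K r2 : ℝ) (hsq : a^2*C = (C-K)*(K+1)) (hC : 13 ≤ C) (hK : 3 ≤ K)
    (hr : 10 ≤ r2) (hcr : C - K = r2) (ha : 0 < a) : 1 < a := by
  by_contra hcon
  push_neg at hcon
  have h1 : a^2 ≤ 1 := by nlinarith
  have h2 : a^2*C ≤ C := by nlinarith
  have h3 : (C-K)*(K+1) = r2*K + r2 := by rw [hcr]; ring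
  nlinarith [h2, h3, hsq, hcr, hr, hK,
    mul_nonneg (by linarith : (0:ℝ) ≤ K - 3) (by linarith : (0:ℝ) ≤ r2 - 10)]

lemma aux_cmp (A B t : ℝ) (hA1 : 1 < A) (hB1 : 1 < B) (ht : 1 < t)
    (h : A - A⁻¹ = t*(B - B⁻¹)) : B < A := by
  by_contra hcon
  push_neg at hcon
  have h1 : B⁻¹ ≤ A⁻¹ := inv_anti₀ (by linarith) hcon
  have hY : 0 < B - B⁻¹ := by
    have := inv_lt_one_of_one_lt₀ hB1
    linarith
  nlinarith [mul_pos (sub_pos.mpr ht) hY]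

lemma aux_inv (A B : ℝ) (h1 : 1 < B) (h2 : B < A) : (A^2)⁻¹ < (B^2)⁻¹ := by
  exact inv_strictAnti₀ (pow_pos (by linarith) 2) (by nlinarith)

lemma aux_final (x : ℝ) (hx0 : 0 < x) (hxs : x ≤ 1/390625) : x/(1-x) ≤ 1.00001*x := by
  have h1x : 0 < 1 - x := by linarith
  rw [div_le_iff₀ h1x]
  nlinarith

set_option maxHeartbeats 1000000 in
theorem stmt_12 (k0 k1 k : ℤ) (hk0 : 0 < k0) (hk1 : 0 < k1)
    (hk0sf : Squarefree k0) (hk : k = k0 * k1 ^ 2) (hk3 : 3 ≤ k)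
    (s : ℕ → ℤ) (hs0 : s 0 = 0) (hs1 : s 1 = 2 * k1)
    (hsrec : ∀ ν, s (ν + 2) = (4 * k + 2) * s (ν + 1) - s ν)
    (ν : ℕ) (hν : 1 ≤ ν) (c r : ℤ)
    (hc : c = k0 * (s ν) ^ 2 + 1) (hr : 0 < r) (hcr : c - k = r ^ 2)
    (w : ℕ → ℤ) (hw0 : w 0 = 0) (hw1 : w 1 = 2 * s ν * r)
    (hwrec : ∀ n, w (n + 2) = (4 * c - 2) * w (n + 1) - w n)
    (m n : ℕ) (hmn : s m = w n) (hn : 2 ≤ n) (hm : n < m)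
    (P Q α1 α2 α3 Λ : ℝ)
    (hα1 : α1 = 2 * (c : ℝ) - 1 + 2 * Real.sqrt ((c : ℝ) ^ 2 - (c : ℝ)))
    (hα2 : α2 = 2 * (k : ℝ) + 1 + 2 * Real.sqrt ((k : ℝ) ^ 2 + (k : ℝ)))
    (hα3 : α3 = Real.sqrt (((c : ℝ) - (k : ℝ)) * ((k : ℝ) + 1) / (c : ℝ)))
    (hP : P = α2 ^ m / Real.sqrt ((k : ℝ) + 1))
    (hQ : Q = Real.sqrt (((c : ℝ) - (k : ℝ)) / (c : ℝ)) * α1 ^ n)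
    (hΛ : Λ = n * Real.log α1 - m * Real.log α2 + Real.log α3) :
    P < Q ∧ Real.log (Q / P) = Λ ∧ 0 < Λ ∧
      Λ < 1.00001 * α1 ^ (-(2 * (n : ℤ))) := by
  -- integer groundwork
  have hmono : ∀ j, 0 ≤ s j ∧ s j ≤ s (j + 1) := by
    intro j
    induction j with
    | zero => exact ⟨le_of_eq hs0.symm, by rw [hs0, hs1]; positivity⟩
    | succ j ih =>
      obtain ⟨h1, h2⟩ := ih
      have h3 : 0 ≤ s (j+1) := le_trans h1 h2
      refine ⟨h3, ?_⟩
      rw [hsrec j]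
      nlinarith
  have hsge : ∀ j, 1 ≤ j → 2 * k1 ≤ s j := by
    intro j hj
    induction j, hj using Nat.le_induction with
    | base => rw [hs1]
    | succ j hj ih => exact le_trans ih (hmono j).2
  have hsv2 : 2 * k1 ≤ s ν := hsge ν hν
  have hsvpos : 0 < s ν := lt_of_lt_of_le (by positivity) hsv2
  have hc1 : c - 1 = k0 * (s ν) ^ 2 := by rw [hc]; ring
  have hc4k : 4 * k + 1 ≤ c := by nlinarith [mul_self_le_mul_self (by positivity : (0:ℤ) ≤ 2*k1) hsv2, hk0, hk3]
  have hc13 : (13:ℤ) ≤ c := by linarith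
  have hr10 : (10:ℤ) ≤ r ^ 2 := by linarith [hcr]
  -- real casts
  have hK3 : (3:ℝ) ≤ (k:ℝ) := by exact_mod_cast hk3
  have hC13 : (13:ℝ) ≤ (c:ℝ) := by exact_mod_cast hc13
  have hrR : (1:ℝ) ≤ (r:ℝ) := by exact_mod_cast hr
  have hcrR : (c:ℝ) - (k:ℝ) = (r:ℝ)^2 := by exact_mod_cast hcr
  have hc1R : (c:ℝ) - 1 = (k0:ℝ) * ((s ν : ℤ):ℝ)^2 := by exact_mod_cast hc1
  have hkR : (k:ℝ) = (k0:ℝ) * (k1:ℝ)^2 := by exact_mod_cast hk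
  have hr2R : (10:ℝ) ≤ (r:ℝ)^2 := by exact_mod_cast hr10
  have hk0R : (1:ℝ) ≤ (k0:ℝ) := by exact_mod_cast hk0
  have hk1R : (1:ℝ) ≤ (k1:ℝ) := by exact_mod_cast hk1
  have hsvR : (1:ℝ) ≤ ((s ν : ℤ):ℝ) := by exact_mod_cast hsvpos
  -- square roots
  set d1 := Real.sqrt ((c:ℝ)^2 - (c:ℝ)) with hd1d
  set d2 := Real.sqrt ((k:ℝ)^2 + (k:ℝ)) with hd2d
  have hd1sq : d1^2 = (c:ℝ)^2 - (c:ℝ) := Real.sq_sqrt (by nlinarith)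
  have hd2sq : d2^2 = (k:ℝ)^2 + (k:ℝ) := Real.sq_sqrt (by nlinarith)
  have hd1pos : 0 < d1 := Real.sqrt_pos.mpr (by nlinarith)
  have hd2pos : 0 < d2 := Real.sqrt_pos.mpr (by nlinarith)
  set R0 := Real.sqrt ((k0:ℝ)) with hR0d
  set Rk := Real.sqrt ((k:ℝ)+1) with hRkd
  set Rc := Real.sqrt ((c:ℝ)) with hRcd
  have hR0sq : R0^2 = (k0:ℝ) := Real.sq_sqrt (by linarith)
  have hRksq : Rk^2 = (k:ℝ)+1 := Real.sq_sqrt (by linarith)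
  have hRcsq : Rc^2 = (c:ℝ) := Real.sq_sqrt (by linarith)
  have hR0pos : 0 < R0 := Real.sqrt_pos.mpr (by linarith)
  have hRkpos : 0 < Rk := Real.sqrt_pos.mpr (by linarith)
  have hRcpos : 0 < Rc := Real.sqrt_pos.mpr (by linarith)
  have hd2eq : d2 = (k1:ℝ) * R0 * Rk := by
    have h2 : ((k1:ℝ) * R0 * Rk)^2 = (k:ℝ)^2 + (k:ℝ) := by
      linear_combination ((k1:ℝ)^2*Rk^2) * hR0sq + ((k1:ℝ)^2*(k0:ℝ)) * hRksq - ((k:ℝ)+1) * hkR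
    rw [hd2d, ← h2, Real.sqrt_sq (by positivity)]
  have hd1eq : d1 = ((s ν : ℤ):ℝ) * R0 * Rc := by
    have h2 : (((s ν : ℤ):ℝ) * R0 * Rc)^2 = (c:ℝ)^2 - (c:ℝ) := by
      linear_combination (((s ν : ℤ):ℝ)^2*Rc^2) * hR0sq + (((s ν : ℤ):ℝ)^2*(k0:ℝ)) * hRcsq - (c:ℝ) * hc1R
    rw [hd1d, ← h2, Real.sqrt_sq (by positivity)]
  -- alpha/beta facts
  set β1 : ℝ := 2*(c:ℝ) - 1 - 2*d1 with hβ1d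
  set β2 : ℝ := 2*(k:ℝ) + 1 - 2*d2 with hβ2d
  have hprod1 : α1 * β1 = 1 := by rw [hα1, hβ1d]; linear_combination (-4 : ℝ) * hd1sq
  have hprod2 : α2 * β2 = 1 := by rw [hα2, hβ2d]; linear_combination (-4 : ℝ) * hd2sq
  have hsum1 : α1 + β1 = ((4*c - 2 : ℤ) : ℝ) := by rw [hα1, hβ1d]; push_cast; ring
  have hsum2 : α2 + β2 = ((4*k + 2 : ℤ) : ℝ) := by rw [hα2, hβ2d]; push_cast; ring
  have hα1ge : (25:ℝ) ≤ α1 := by rw [hα1]; linarith [hd1pos]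
  have hα2ge : (7:ℝ) ≤ α2 := by rw [hα2]; linarith [hd2pos]
  have hα1gt1 : (1:ℝ) < α1 := by linarith
  have hα2gt1 : (1:ℝ) < α2 := by linarith
  have hα1ne : α1 ≠ 0 := by positivity
  have hα2ne : α2 ≠ 0 := by positivity
  have hβ1inv : β1 = α1⁻¹ := eq_inv_of_mul_eq_one_left (by rw [mul_comm]; exact hprod1)
  have hβ2inv : β2 = α2⁻¹ := eq_inv_of_mul_eq_one_left (by rw [mul_comm]; exact hprod2)
  -- closed forms
  have hSform : ∀ j, (s j : ℝ) = ((k1:ℝ)/(2*d2)) * (α2 ^ j - β2 ^ j) := by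
    apply closed_form s (4*k+2) hsrec α2 β2 _ hprod2 hsum2
    · rw [hs0]; push_cast; ring
    · rw [hs1]; push_cast
      rw [hα2, hβ2d]
      field_simp
      ring
  have hWform : ∀ j, (w j : ℝ) = (((s ν : ℤ):ℝ)*(r:ℝ)/(2*d1)) * (α1 ^ j - β1 ^ j) := by
    apply closed_form w (4*c-2) hwrec α1 β1 _ hprod1 hsum1
    · rw [hw0]; push_cast; ring
    · rw [hw1]; push_cast
      rw [hα1, hβ1d]
      field_simp
      ring
  have hEq : ((k1:ℝ)/(2*d2)) * (α2^m - β2^m) = (((s ν : ℤ):ℝ)*(r:ℝ)/(2*d1)) * (α1^n - β1^n) := by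
    rw [← hSform m, ← hWform n]
    exact_mod_cast congrArg (fun z : ℤ => (z:ℝ)) hmn
  -- powers
  have hCpos : (0:ℝ) < (c:ℝ) := by linarith
  have hα1npos : (0:ℝ) < α1^n := pow_pos (by linarith) n
  have hα2mpos : (0:ℝ) < α2^m := pow_pos (by linarith) m
  have hα1nne : α1^n ≠ 0 := ne_of_gt hα1npos
  have hα2mne : α2^m ≠ 0 := ne_of_gt hα2mpos
  have hn0 : n ≠ 0 := by omega
  have hm0 : m ≠ 0 := by omega
  have hα1ngt1 : 1 < α1^n := one_lt_pow₀ hα1gt1 hn0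
  have hα2mgt1 : 1 < α2^m := one_lt_pow₀ hα2gt1 hm0
  -- alpha3
  have hα3eq : α3 = (r:ℝ) * Rk / Rc := by
    have h2 : ((r:ℝ) * Rk / Rc)^2 = ((c:ℝ)-(k:ℝ)) * ((k:ℝ)+1) / (c:ℝ) := by
      rw [div_pow, mul_pow, hRksq, hRcsq, ← hcrR]
    rw [hα3, ← h2, Real.sqrt_sq (div_nonneg (mul_nonneg (by linarith) hRkpos.le) hRcpos.le)]
  have hα3pos : 0 < α3 := by
    rw [hα3eq]; exact div_pos (mul_pos (by linarith) hRkpos) hRcpos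
  have hα3sqC : α3^2 * (c:ℝ) = ((c:ℝ)-(k:ℝ)) * ((k:ℝ)+1) := by
    rw [hα3eq, div_pow, mul_pow, hRksq, hRcsq, div_mul_cancel₀ _ (ne_of_gt hCpos), ← hcrR]
  have hα3gt1 : 1 < α3 :=
    aux_gt1 α3 (c:ℝ) (k:ℝ) ((r:ℝ)^2) hα3sqC hC13 hK3 hr2R hcrR hα3pos
  -- rewrite hEq
  rw [hβ2inv, hβ1inv, inv_pow, inv_pow, hd2eq, hd1eq] at hEq
  have hk1ne : (k1:ℝ) ≠ 0 := by linarith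
  have hsvne : ((s ν : ℤ):ℝ) ≠ 0 := by linarith
  have hR0ne : R0 ≠ 0 := ne_of_gt hR0pos
  have hRkne : Rk ≠ 0 := ne_of_gt hRkpos
  have hRcne : Rc ≠ 0 := ne_of_gt hRcpos
  have hA : α2^m - (α2^m)⁻¹ = α3 * (α1^n - (α1^n)⁻¹) := by
    rw [hα3eq]
    have h1 : (k1:ℝ)/(2*((k1:ℝ)*R0*Rk)) = 1/(2*R0*Rk) := by field_simp
    have h2 : ((s ν : ℤ):ℝ)*(r:ℝ)/(2*(((s ν : ℤ):ℝ)*R0*Rc)) = (r:ℝ)/(2*R0*Rc) := by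
      field_simp
    rw [h1, h2] at hEq
    calc α2^m - (α2^m)⁻¹ = (2*R0*Rk) * (1/(2*R0*Rk) * (α2^m - (α2^m)⁻¹)) := by
          field_simp
      _ = (2*R0*Rk) * ((r:ℝ)/(2*R0*Rc) * (α1^n - (α1^n)⁻¹)) := by rw [hEq]
      _ = (r:ℝ) * Rk / Rc * (α1^n - (α1^n)⁻¹) := by field_simp
  -- comparison
  have hYpos : 0 < α1^n - (α1^n)⁻¹ := by
    have h := inv_lt_one_of_one_lt₀ hα1ngt1
    linarith
  have hab : α1^n < α2^m := aux_cmp (α2^m) (α1^n) α3 hα2mgt1 hα1ngt1 hα3gt1 hA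
  set x : ℝ := ((α1^n)^2)⁻¹ with hxdef
  set y : ℝ := ((α2^m)^2)⁻¹ with hydef
  have hx0 : 0 < x := by rw [hxdef]; exact inv_pos.mpr (pow_pos hα1npos 2)
  have hy0 : 0 < y := by rw [hydef]; exact inv_pos.mpr (pow_pos hα2mpos 2)
  have hyx : y < x := by
    rw [hxdef, hydef]
    exact aux_inv (α2^m) (α1^n) hα1ngt1 hab
  have hx1 : x < 1 := by
    rw [hxdef]
    exact inv_lt_one_of_one_lt₀ (one_lt_pow₀ hα1ngt1 (by norm_num))
  have hxsmall : x ≤ 1/390625 := by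
    have h625 : (625:ℝ) ≤ α1^n := by
      calc (625:ℝ) = 25^2 := by norm_num
        _ ≤ α1^2 := pow_le_pow_left₀ (by norm_num) hα1ge 2
        _ ≤ α1^n := pow_le_pow_right₀ (by linarith) hn
    rw [hxdef, show (1:ℝ)/390625 = ((625:ℝ)^2)⁻¹ by norm_num]
    exact inv_anti₀ (by norm_num) (pow_le_pow_left₀ (by norm_num) h625 2)
  -- P and Q
  have hQform : Q = (r:ℝ) * α1^n / Rc := by
    rw [hQ]
    have h : Real.sqrt (((c:ℝ)-(k:ℝ))/(c:ℝ)) = (r:ℝ)/Rc := by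
      rw [hcrR, hRcd, Real.sqrt_div (by positivity) _, Real.sqrt_sq (by linarith)]
    rw [h]; ring
  have hPpos : 0 < P := by
    rw [hP]; exact div_pos (pow_pos (by linarith) m) hRkpos
  have hQpos : 0 < Q := by
    rw [hQform]; exact div_pos (mul_pos (by linarith) hα1npos) hRcpos
  have e1 : P * (1 - y) = (α2^m - (α2^m)⁻¹)/Rk := by
    rw [hP, hydef]; field_simp
  have e2 : Q * (1 - x) = (r:ℝ) * (α1^n - (α1^n)⁻¹)/Rc := by
    rw [hQform, hxdef]; field_simp
  have hB : P * (1 - y) = Q * (1 - x) := by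
    rw [e1, e2, hA, hα3eq]; field_simp
  have h1x : 0 < 1 - x := by linarith
  have h1y : 0 < 1 - y := by linarith
  have hPQ : P < Q := by
    have hlt : P * (1 - x) < Q * (1 - x) := by
      rw [← hB]; exact mul_lt_mul_of_pos_left (by linarith) hPpos
    exact lt_of_mul_lt_mul_right hlt h1x.le
  have hQP2 : Q / P = (1 - y)/(1 - x) := by
    rw [div_eq_div_iff (ne_of_gt hPpos) (ne_of_gt h1x)]
    linarith [hB]
  have hQPform : Q / P = α3 * (α1^n / α2^m) := by
    rw [hP, hQform, hα3eq]; field_simp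
  have hlogeq : Real.log (Q/P) = Λ := by
    rw [hΛ, hQPform, Real.log_mul (ne_of_gt hα3pos) (ne_of_gt (div_pos hα1npos hα2mpos)),
      Real.log_div hα1nne hα2mne, Real.log_pow, Real.log_pow]
    ring
  have hΛpos : 0 < Λ := by
    rw [← hlogeq]; exact Real.log_pos ((one_lt_div hPpos).mpr hPQ)
  have hΛlt : Λ < 1.00001 * x := by
    rw [← hlogeq, hQP2, Real.log_div (ne_of_gt h1y) (ne_of_gt h1x)]
    have l1 : Real.log (1 - y) < 0 := Real.log_neg h1y (by linarith)
    have l2 : -Real.log (1 - x) ≤ x/(1 - x) := by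
      rw [← Real.log_inv]
      have h := Real.log_le_sub_one_of_pos (inv_pos.mpr h1x)
      have h3 : (1-x)⁻¹ - 1 = x/(1-x) := by field_simp; ring
      linarith
    have l3 : x/(1-x) ≤ 1.00001 * x := aux_final x hx0 hxsmall
    linarith
  refine ⟨hPQ, hlogeq, hΛpos, ?_⟩
  have hxz : α1 ^ (-(2 * (n:ℤ))) = x := by
    rw [hxdef, zpow_neg]
    congr 1
    rw [show (2 * (n:ℤ)) = ((n * 2 : ℕ) : ℤ) by push_cast; ring, zpow_natCast, pow_mul]
  rw [hxz]
  exact hΛlt
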